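/- Let Σ be symmetric positive definite, Σ = L·Lᵀ with L invertible, and let Ω be symmetric with ‖Δt(-LᵀL + I + Ω)‖₂ ≤ 1. Then tr(L·(exp(Δt(-LᵀL+I+Ω)) - I)·Lᵀ) ≤ Δt·tr(LᵀL·(-LᵀL+I+Ω)) + Δt²·tr(LᵀL·(-LᵀL+I+Ω)²). -/

import Mathlib

open Matrix

/-- Spectral norm (operator 2-norm) of a real matrix. -/
noncomputable def specNorm {n : ℕ} (A : Matrix (Fin n) (Fin n) ℝ) : ℝ :=
  ‖Matrix.toEuclideanCLM (𝕜 := ℝ) A‖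

private lemma exp_quad_bound {x : ℝ} (hx : |x| ≤ 1) : Real.exp x ≤ 1 + x + x * x := by
  have h := Real.exp_bound hx (by norm_num : 0 < 2)
  simp [Finset.sum_range_succ] at h
  rw [abs_le] at h
  nlinarith [sq_abs x, abs_nonneg x]

private lemma psd_diag_nonneg {n : ℕ} {Q : Matrix (Fin n) (Fin n) ℝ}
    (hQ : Q.PosSemidef) (i : Fin n) : 0 ≤ Q i i := by
  exact hQ.diag_nonneg

/-- If `Σ = L·Lᵀ` is SPD, `Ω` is symmetric and `‖Δt(-LᵀL + I + Ω)‖₂ ≤ 1`, then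
`tr(L(exp(Δt(-LᵀL+I+Ω)) - I)Lᵀ) ≤ Δt·tr(LᵀL(-LᵀL+I+Ω)) + Δt²·tr(LᵀL(-LᵀL+I+Ω)²)`. -/
theorem stmt_14 {n : ℕ} (L Ω : Matrix (Fin n) (Fin n) ℝ) (Δt : ℝ)
    (hS : (L * Lᵀ).PosDef) (hL : IsUnit L.det) (hΩ : Ω.IsSymm)
    (hnorm : specNorm (Δt • (-(Lᵀ * L) + 1 + Ω)) ≤ 1) :
    (L * (NormedSpace.exp (Δt • (-(Lᵀ * L) + 1 + Ω)) - 1) * Lᵀ).trace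
      ≤ Δt * ((Lᵀ * L) * (-(Lᵀ * L) + 1 + Ω)).trace
        + Δt ^ 2 * ((Lᵀ * L) * ((-(Lᵀ * L) + 1 + Ω) * (-(Lᵀ * L) + 1 + Ω))).trace := by
  rcases Nat.eq_zero_or_pos n with hn | hn
  · subst hn
    simp [Matrix.trace]
  haveI : NeZero n := ⟨hn.ne'⟩
  set M : Matrix (Fin n) (Fin n) ℝ := -(Lᵀ * L) + 1 + Ω with hMdef
  set A : Matrix (Fin n) (Fin n) ℝ := Δt • M with hAdef
  set P : Matrix (Fin n) (Fin n) ℝ := Lᵀ * L with hPdef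
  have hP : P.PosSemidef := by
    have := Matrix.posSemidef_conjTranspose_mul_self L
    simpa [Matrix.conjTranspose_eq_transpose_of_trivial] using this
  have hΩh : Ω.IsHermitian := by
    rw [Matrix.IsHermitian, Matrix.conjTranspose]
    exact (Matrix.conjTranspose_eq_transpose_of_trivial Ω).trans hΩ
  have hMh : M.IsHermitian := (hP.1.neg.add Matrix.isHermitian_one).add hΩh
  have hA : A.IsHermitian := by
    rw [Matrix.IsHermitian, hAdef, Matrix.conjTranspose_smul, hMh.eq]
    simp
  set U : Matrix (Fin n) (Fin n) ℝ := (Matrix.IsHermitian.eigenvectorUnitary hA : Matrix (Fin n) (Fin n) ℝ) with hUdef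
  set ev : Fin n → ℝ := hA.eigenvalues with hevdef
  have hUU : U * star U = 1 := Matrix.mem_unitaryGroup_iff.mp (Matrix.IsHermitian.eigenvectorUnitary hA).2
  have hU'U : star U * U = 1 := Matrix.mem_unitaryGroup_iff'.mp (Matrix.IsHermitian.eigenvectorUnitary hA).2
  -- spectrum bound
  have hspec : ∀ i, |ev i| ≤ 1 := by
    intro i
    have hx : ev i ∈ spectrum ℝ A := by
      rw [Matrix.IsHermitian.spectrum_real_eq_range_eigenvalues hA]
      exact ⟨i, rfl⟩
    have h2 : ev i ∈ spectrum ℝ (Matrix.toEuclideanCLM (𝕜 := ℝ) A) := by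
      rwa [AlgEquiv.spectrum_eq (Matrix.toEuclideanCLM (𝕜 := ℝ) (n := Fin n)) A]
    calc |ev i| = ‖ev i‖ := (Real.norm_eq_abs _).symm
      _ ≤ ‖Matrix.toEuclideanCLM (𝕜 := ℝ) A‖ := spectrum.norm_le_norm_of_mem h2
      _ ≤ 1 := hnorm
  -- diagonalizations
  have hExp : NormedSpace.exp A = U * diagonal (fun i => Real.exp (ev i)) * star U := by
    have h1 : NormedSpace.exp A = hA.cfc Real.exp := by
      rw [← Matrix.IsHermitian.cfc_eq]
      letI : NormedRing (Matrix (Fin n) (Fin n) ℝ) := Matrix.linftyOpNormedRing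
      letI : NormedAlgebra ℝ (Matrix (Fin n) (Fin n) ℝ) := Matrix.linftyOpNormedAlgebra
      exact (@CFC.real_exp_eq_normedSpace_exp _ _ _ _ Matrix.IsHermitian.instContinuousFunctionalCalculus A hA).symm
    rw [h1, Matrix.IsHermitian.cfc]
    simp [Function.comp_def]
    rfl
  have hA_eq : A = U * diagonal ev * star U := by
    conv_lhs => rw [hA.spectral_theorem]
    simp [Function.comp_def]
    rfl
  have hOne : (1 : Matrix (Fin n) (Fin n) ℝ) = U * diagonal (fun _ => (1:ℝ)) * star U := by
    rw [show diagonal (fun _ : Fin n => (1:ℝ)) = 1 from Matrix.diagonal_one, mul_one, hUU]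
  have hAA : A * A = U * diagonal (fun i => ev i * ev i) * star U := by
    rw [hA_eq]
    calc (U * diagonal ev * star U) * (U * diagonal ev * star U)
        = U * diagonal ev * (star U * U) * diagonal ev * star U := by
          simp only [mul_assoc]
      _ = U * (diagonal ev * diagonal ev) * star U := by rw [hU'U]; simp only [mul_one, mul_assoc]
      _ = U * diagonal (fun i => ev i * ev i) * star U := by
          rw [Matrix.diagonal_mul_diagonal]
  have hC : NormedSpace.exp A - 1 - A - A * A
      = U * diagonal (fun i => Real.exp (ev i) - 1 - ev i - ev i * ev i) * star U := by
    have : diagonal (fun i => Real.exp (ev i) - 1 - ev i - ev i * ev i)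
        = diagonal (fun i => Real.exp (ev i)) - diagonal (fun _ => (1:ℝ))
          - diagonal ev - diagonal (fun i => ev i * ev i) := by
      simp [← Matrix.diagonal_sub]
    rw [this, hExp, hAA]
    conv_lhs => rw [hOne, hA_eq]
    simp only [Matrix.mul_sub, Matrix.sub_mul]
  -- trace inequality
  have key : (P * (NormedSpace.exp A - 1 - A - A * A)).trace ≤ 0 := by
    rw [hC]
    set d : Fin n → ℝ := fun i => Real.exp (ev i) - 1 - ev i - ev i * ev i with hd
    have hQ : (star U * P * U).PosSemidef := by
      have := hP.conjTranspose_mul_mul_same U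
      simpa [Matrix.star_eq_conjTranspose] using this
    have htr : (P * (U * diagonal d * star U)).trace
        = ((star U * P * U) * diagonal d).trace := by
      rw [show P * (U * diagonal d * star U) = (P * U * diagonal d) * star U by
        simp only [mul_assoc], Matrix.trace_mul_comm]
      simp only [mul_assoc]
    rw [htr]
    have : ((star U * P * U) * diagonal d).trace
        = ∑ i, (star U * P * U) i i * d i := by
      simp [Matrix.trace, Matrix.mul_diagonal, Matrix.diag]
    rw [this]
    apply Finset.sum_nonpos
    intro i _
    apply mul_nonpos_of_nonneg_of_nonpos (psd_diag_nonneg hQ i)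
    have := exp_quad_bound (hspec i)
    simp only [hd]
    linarith
  -- final arithmetic
  have e1 : (L * (NormedSpace.exp A - 1) * Lᵀ).trace
      = (P * (NormedSpace.exp A - 1)).trace := by
    rw [Matrix.trace_mul_cycle]
  have e2 : Δt * (P * M).trace = (P * A).trace := by
    rw [hAdef, Matrix.mul_smul, Matrix.trace_smul, smul_eq_mul]
  have e3 : Δt ^ 2 * (P * (M * M)).trace = (P * (A * A)).trace := by
    rw [hAdef, smul_mul_smul_comm, Matrix.mul_smul, Matrix.trace_smul, smul_eq_mul, sq]
  have e4 : (P * (NormedSpace.exp A - 1)).trace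
      = (P * (NormedSpace.exp A - 1 - A - A * A)).trace + (P * A).trace + (P * (A * A)).trace := by
    simp only [Matrix.mul_sub, Matrix.trace_sub]
    ring
  rw [e1, e2, e3, e4]
  linarith
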